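/- Let p(t) = ∑_{i=0}^k c_i t^i be a degree-k univariate polynomial over ℝ and let a, b ∈ ℝ. Define r(t) = p(a·t + b) = ∑_{i=0}^k d_i t^i. Then ∑_{i=0}^k d_i² ≤ (2 · max(1, |a|) · max(1, |b|))^{2k} · ∑_{i=0}^k c_i². -/

import Mathlib

open Polynomial Finset

-- coefficient of (C a * X + C b)^j
lemma pow_coeff_eq (a b : ℝ) (j i : ℕ) :
    ((Polynomial.C a * Polynomial.X + Polynomial.C b) ^ j).coeff i
      = (j.choose i : ℝ) * a ^ i * b ^ (j - i) := by
  rw [add_pow]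
  rw [Polynomial.finset_sum_coeff]
  have : ∀ m ∈ Finset.range (j + 1),
      ((Polynomial.C a * Polynomial.X) ^ m * Polynomial.C b ^ (j - m) * (j.choose m : ℝ[X])).coeff i
      = if m = i then (j.choose i : ℝ) * a ^ i * b ^ (j - i) else 0 := by
    intro m _
    rw [mul_pow, ← Polynomial.C_pow, ← Polynomial.C_pow]
    have hc : (j.choose m : ℝ[X]) = Polynomial.C (j.choose m : ℝ) := by simp
    rw [hc, mul_right_comm, mul_assoc, ← Polynomial.C_mul, mul_comm (Polynomial.C (a^m)),
      mul_assoc, ← Polynomial.C_mul, mul_comm (Polynomial.X ^ m), Polynomial.coeff_C_mul,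
      Polynomial.coeff_X_pow]
    by_cases h : m = i
    · subst h; simp; ring
    · simp [h, Ne.symm h]
  rw [Finset.sum_congr rfl this]
  rw [Finset.sum_ite_eq' (Finset.range (j+1)) i]
  rcases le_or_gt i j with h | h
  · simp [Nat.lt_succ_of_le h]
  · simp only [Finset.mem_range, Nat.lt_succ_iff, not_le.mpr h, if_false]
    rw [Nat.choose_eq_zero_of_lt h]
    simp

lemma two_mul_centralBinom_le (n : ℕ) (hn : 1 ≤ n) : 2 * Nat.centralBinom n ≤ 4 ^ n := by
  induction n with
  | zero => omega
  | succ m ih =>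
    rcases Nat.eq_zero_or_pos m with hm | hm
    · subst hm; simp [Nat.centralBinom]
    · have h1 := Nat.succ_mul_centralBinom_succ m
      have h2 : (m + 1) * Nat.centralBinom (m + 1) ≤ (m + 1) * (4 * Nat.centralBinom m) := by
        rw [h1]; nlinarith [Nat.centralBinom_pos m]
      have h3 : Nat.centralBinom (m + 1) ≤ 4 * Nat.centralBinom m :=
        Nat.le_of_mul_le_mul_left h2 (Nat.succ_pos m)
      have := ih hm
      calc 2 * Nat.centralBinom (m + 1) ≤ 2 * (4 * Nat.centralBinom m) := by omega
        _ = 4 * (2 * Nat.centralBinom m) := by ring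
        _ ≤ 4 * 4 ^ m := by omega
        _ = 4 ^ (m + 1) := by ring

lemma sum_centralBinom_le (k : ℕ) :
    ∑ j ∈ Finset.range (k + 1), Nat.centralBinom j ≤ 4 ^ k := by
  induction k with
  | zero => simp [Nat.centralBinom]
  | succ m ih =>
    rw [Finset.sum_range_succ]
    have h1 : 2 * Nat.centralBinom (m + 1) ≤ 4 ^ (m + 1) := two_mul_centralBinom_le _ (by omega)
    have : (4:ℕ) ^ (m+1) = 4 * 4 ^ m := by ring
    omega

lemma sum_choose_sq (j k : ℕ) (hjk : j ≤ k) :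
    ∑ i ∈ Finset.range (k + 1), (j.choose i) ^ 2 = Nat.centralBinom j := by
  have h1 : ∑ i ∈ Finset.range (k + 1), (j.choose i) ^ 2
      = ∑ i ∈ Finset.range (j + 1), (j.choose i) ^ 2 := by
    refine (Finset.sum_subset (Finset.range_subset_range.mpr (by omega)) fun x _ hx => ?_).symm
    simp only [Finset.mem_range, Nat.lt_succ_iff, not_le] at hx
    rw [Nat.choose_eq_zero_of_lt hx]; ring
  rw [h1, Nat.centralBinom, two_mul, Nat.add_choose_eq,
    Finset.Nat.sum_antidiagonal_eq_sum_range_succ_mk]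
  refine Finset.sum_congr rfl fun i hi => ?_
  simp only [Finset.mem_range, Nat.lt_succ_iff] at hi
  simp only [Nat.choose_symm hi, sq]

lemma pow_sq_le_aux (x M : ℝ) (hx : |x| ≤ M) (hM : 1 ≤ M) {i k : ℕ} (hik : i ≤ k) :
    (x ^ i) ^ 2 ≤ (M ^ 2) ^ k := by
  have hx2 : x ^ 2 ≤ M ^ 2 := by nlinarith [abs_nonneg x, sq_abs x]
  calc (x ^ i) ^ 2 = (x ^ 2) ^ i := by rw [← pow_mul, ← pow_mul, mul_comm]
    _ ≤ (M ^ 2) ^ i := pow_le_pow_left₀ (sq_nonneg x) hx2 i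
    _ ≤ (M ^ 2) ^ k := pow_le_pow_right₀ (by nlinarith) hik

theorem stmt6 {k : ℕ} (p : Polynomial ℝ) (hp : p.natDegree ≤ k) (a b : ℝ)
    (r : Polynomial ℝ)
    (hr : r = p.comp (Polynomial.C a * Polynomial.X + Polynomial.C b)) :
    ∑ i ∈ Finset.range (k + 1), (r.coeff i) ^ 2
      ≤ (2 * max 1 |a| * max 1 |b|) ^ (2 * k)
        * ∑ i ∈ Finset.range (k + 1), (p.coeff i) ^ 2 := by
  set A := max 1 |a| with hA
  set B := max 1 |b| with hB
  have hA1 : (1:ℝ) ≤ A := le_max_left _ _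
  have hB1 : (1:ℝ) ≤ B := le_max_left _ _
  have haA : |a| ≤ A := le_max_right _ _
  have hbB : |b| ≤ B := le_max_right _ _
  have hd : ∀ i, r.coeff i = ∑ j ∈ Finset.range (k+1),
      p.coeff j * ((j.choose i : ℝ) * a ^ i * b ^ (j - i)) := by
    intro i
    conv_lhs => rw [hr, p.as_sum_range' (k+1) (Nat.lt_succ_of_le hp)]
    rw [Polynomial.comp, Polynomial.eval₂_finset_sum, Polynomial.finset_sum_coeff]
    refine Finset.sum_congr rfl fun j _ => ?_
    rw [Polynomial.eval₂_monomial, Polynomial.coeff_C_mul, pow_coeff_eq]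
  set S := ∑ i ∈ Finset.range (k + 1), (p.coeff i) ^ 2 with hS
  have hS0 : 0 ≤ S := Finset.sum_nonneg fun _ _ => sq_nonneg _
  have key : ∑ i ∈ Finset.range (k+1), (r.coeff i)^2 ≤
      S * (∑ i ∈ Finset.range (k+1), ∑ j ∈ Finset.range (k+1),
          ((j.choose i : ℝ) * a ^ i * b ^ (j - i))^2) := by
    rw [Finset.mul_sum]
    refine Finset.sum_le_sum fun i _ => ?_
    rw [hd i]
    exact Finset.sum_mul_sq_le_sq_mul_sq _ _ _
  have hT : (∑ i ∈ Finset.range (k+1), ∑ j ∈ Finset.range (k+1),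
          ((j.choose i : ℝ) * a ^ i * b ^ (j - i))^2)
      ≤ (2 * A * B) ^ (2*k) := by
    have hpow : ((2 * A * B) ^ (2*k) : ℝ) = 4^k * ((A^2)^k * (B^2)^k) := by
      rw [pow_mul, show ((2*A*B)^2 : ℝ) = 4 * (A^2 * B^2) from by ring, mul_pow, mul_pow]
    calc (∑ i ∈ Finset.range (k+1), ∑ j ∈ Finset.range (k+1),
          ((j.choose i : ℝ) * a ^ i * b ^ (j - i))^2)
        ≤ ∑ i ∈ Finset.range (k+1), ∑ j ∈ Finset.range (k+1),
          (j.choose i : ℝ)^2 * ((A^2)^k * (B^2)^k) := by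
          refine Finset.sum_le_sum fun i hi => Finset.sum_le_sum fun j hj => ?_
          simp only [Finset.mem_range, Nat.lt_succ_iff] at hi hj
          have h1 : (a ^ i) ^ 2 ≤ (A^2)^k := pow_sq_le_aux a A haA hA1 hi
          have h2 : (b ^ (j - i)) ^ 2 ≤ (B^2)^k :=
            pow_sq_le_aux b B hbB hB1 (le_trans (Nat.sub_le j i) hj)
          have h3 : ((j.choose i : ℝ) * a ^ i * b ^ (j - i))^2
              = (j.choose i : ℝ)^2 * ((a ^ i)^2 * (b ^ (j-i))^2) := by ring
          rw [h3]
          have hc0 : (0:ℝ) ≤ (j.choose i : ℝ)^2 := sq_nonneg _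
          refine mul_le_mul_of_nonneg_left ?_ hc0
          have hb0 : (0:ℝ) ≤ (b ^ (j-i))^2 := sq_nonneg _
          have hA0 : (0:ℝ) ≤ (A^2)^k := by positivity
          exact mul_le_mul h1 h2 hb0 hA0
      _ = (∑ j ∈ Finset.range (k+1), ∑ i ∈ Finset.range (k+1), (j.choose i : ℝ)^2)
            * ((A^2)^k * (B^2)^k) := by
          rw [Finset.sum_comm]
          simp_rw [← Finset.sum_mul]
      _ ≤ (4:ℝ)^k * ((A^2)^k * (B^2)^k) := by
          refine mul_le_mul_of_nonneg_right ?_ (by positivity)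
          have hcast : (∑ j ∈ Finset.range (k+1), ∑ i ∈ Finset.range (k+1),
              (j.choose i : ℝ)^2) = ((∑ j ∈ Finset.range (k+1), Nat.centralBinom j : ℕ) : ℝ) := by
            push_cast
            refine Finset.sum_congr rfl fun j hj => ?_
            simp only [Finset.mem_range, Nat.lt_succ_iff] at hj
            rw [show ∀ x:ℕ, ((x:ℝ)) = ((x:ℕ):ℝ) from fun x => rfl]
            rw_mod_cast [sum_choose_sq j k hj]
          rw [hcast]
          exact_mod_cast sum_centralBinom_le k
      _ = (2 * A * B) ^ (2*k) := hpow.symm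
  calc ∑ i ∈ Finset.range (k+1), (r.coeff i)^2 ≤ S * (∑ i ∈ Finset.range (k+1),
        ∑ j ∈ Finset.range (k+1), ((j.choose i : ℝ) * a ^ i * b ^ (j - i))^2) := key
    _ ≤ S * (2 * A * B) ^ (2*k) := mul_le_mul_of_nonneg_left hT hS0
    _ = (2 * A * B) ^ (2*k) * S := mul_comm _ _
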